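/- Let p ≥ 5 be a prime, let k be an integer with 2 ≤ k ≤ (p−1)/2, and let m ≥ k + 3 be an integer. Then there is no integer j with 0 ≤ j ≤ pm − k² − 1 satisfying j² − (pm − k²)·j + p + k² − mp = 0. -/
import Mathlib

/-- Equation (26): for `p ≥ 5` prime, `2 ≤ k ≤ (p-1)/2` and `m ≥ k+3`, the quadratic
`j² - (pm - k²)·j + p + k² - mp` has no integer root in `[0, pm - k² - 1]`. -/
theorem no_root_eq26 (p k m : ℤ) (hp : Prime p) (hp5 : 5 ≤ p)
    (hk2 : 2 ≤ k) (hk : k ≤ (p - 1) / 2) (hm : k + 3 ≤ m) :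
    ¬ ∃ j : ℤ, 0 ≤ j ∧ j ≤ p * m - k ^ 2 - 1 ∧
      j ^ 2 - (p * m - k ^ 2) * j + p + k ^ 2 - m * p = 0 := by
  rintro ⟨j, hj0, hj1, heq⟩
  have h2k : 2 * k ≤ p - 1 := by omega
  nlinarith [mul_nonneg hj0 (by linarith : (0:ℤ) ≤ p * m - k ^ 2 - 1 - j),
    mul_nonneg (by linarith : (0:ℤ) ≤ p - 2 * k - 1) (by linarith : (0:ℤ) ≤ k + 2),
    mul_nonneg (by linarith : (0:ℤ) ≤ p) (by linarith : (0:ℤ) ≤ m - k - 3)]
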